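/- Let X = (X,d_X,μ) and Y = (Y,d_Y,ν) be compact metric measure spaces, λ : [0,∞) → [0,∞) a cost, ρ > 0 and ε ≥ 0. Assume the kernel λ(|d_X − d_Y|) is negative semi-definite in the sense that for all finite positive Borel measures η₁, η₂ on X × Y with η₁(X×Y) = η₂(X×Y), one has ∬ λ(|d_X(x,x') − d_Y(y,y')|) d(η₁−η₂)(x,y) d(η₁−η₂)(x',y') ≤ 0. Define F_ε(π,γ) = ∬ λ(|d_X(x,x') − d_Y(y,y')|) dπ(x,y) dγ(x',y') + ρ·KL(π₁⊗γ₁|μ⊗μ) + ρ·KL(π₂⊗γ₂|ν⊗ν) + ε·KL(π⊗γ|(μ⊗ν)⊗(μ⊗ν)). Then every minimizer (π*, γ*) of F_ε over pairs of finite positive Borel measures on X × Y with equal total mass m(π) = m(γ) satisfies F_ε(π*,γ*) = F_ε(π*,π*) = F_ε(γ*,γ*); i.e. the bi-convex relaxation of the entropic KL-unbalanced Gromov–Wasserstein problem is tight. -/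

import Mathlib

open MeasureTheory ENNReal NNReal

noncomputable section

open Classical in
/-- The Kullback--Leibler divergence: `KL(μ|ν) = ∫ log(dμ/dν) dμ − m(μ) + m(ν)` when
`μ ≪ ν` (written in its equivalent nonnegative Csiszár form
`∫ (f·log f − f + 1) dν` with `f = dμ/dν`), and `+∞` otherwise. -/
def KLDiv {α : Type*} [MeasurableSpace α] (μ ν : Measure α) : ℝ≥0∞ :=
  if μ ≪ ν then
    ∫⁻ x, ENNReal.ofReal ((μ.rnDeriv ν x).toReal * Real.log (μ.rnDeriv ν x).toReal
      - (μ.rnDeriv ν x).toReal + 1) ∂ν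
  else ∞

/-- The Gromov--Wasserstein kernel `λ(|d_X(x,x') − d_Y(y,y')|)` on pairs
`((x,y),(x',y'))`. -/
def gwKer {X Y : Type*} [MetricSpace X] [MetricSpace Y] (lam : ℝ≥0 → ℝ≥0)
    (z : (X × Y) × (X × Y)) : ℝ≥0∞ :=
  (lam (Real.toNNReal |dist z.1.1 z.2.1 - dist z.1.2 z.2.2|) : ℝ≥0∞)

/-- The relaxed entropic KL-unbalanced Gromov--Wasserstein functional
`F_ε(π,γ) = ∬ λ(|d_X−d_Y|) dπ dγ + ρ·KL(π₁⊗γ₁|μ⊗μ) + ρ·KL(π₂⊗γ₂|ν⊗ν)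
  + ε·KL(π⊗γ|(μ⊗ν)⊗(μ⊗ν))`. -/
def Feps {X Y : Type*} [MetricSpace X] [MetricSpace Y]
    [MeasurableSpace X] [MeasurableSpace Y]
    (lam : ℝ≥0 → ℝ≥0) (ρ ε : ℝ≥0) (μ : Measure X) (ν : Measure Y)
    (π γ : Measure (X × Y)) : ℝ≥0∞ :=
  (∫⁻ z, gwKer lam z ∂(π.prod γ))
    + ρ * KLDiv (π.fst.prod γ.fst) (μ.prod μ)
    + ρ * KLDiv (π.snd.prod γ.snd) (ν.prod ν)
    + ε * KLDiv (π.prod γ) ((μ.prod ν).prod (μ.prod ν))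


section AuxLemmas

variable {Z W : Type*} [MeasurableSpace Z] [MeasurableSpace W]


lemma phi_nonneg {t : ℝ} (ht : 0 ≤ t) : 0 ≤ t * Real.log t - t + 1 := by
  rcases ht.eq_or_lt with h | h
  · simp [← h]
  · have h1 : Real.log t⁻¹ ≤ t⁻¹ - 1 := Real.log_le_sub_one_of_pos (by positivity)
    rw [Real.log_inv] at h1
    have h2 : t * t⁻¹ = 1 := mul_inv_cancel₀ h.ne'
    nlinarith

lemma phi_identity {s t : ℝ} (hs : 0 ≤ s) (ht : 0 ≤ t) :
    s * t * Real.log (s * t) - s * t + 1 + s + t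
      = (s * Real.log s - s + 1) * t + s * (t * Real.log t - t + 1) + s * t + 1 := by
  rcases eq_or_ne s 0 with rfl | hs0
  · simp; ring
  rcases eq_or_ne t 0 with rfl | ht0
  · simp; ring
  rw [Real.log_mul hs0 ht0]; ring

lemma not_ac_prod_left {α μ : Measure Z} {β ν : Measure W} [SFinite β] [SFinite ν]
    (h : ¬ α ≪ μ) (hb : β Set.univ ≠ 0) : ¬ (α.prod β ≪ μ.prod ν) := by
  intro hp
  apply h
  intro s hs
  have hμt : μ (toMeasurable μ s) = 0 := by rwa [measure_toMeasurable]
  have h2 : (μ.prod ν) (toMeasurable μ s ×ˢ Set.univ) = 0 := by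
    rw [Measure.prod_prod, hμt, zero_mul]
  have h3 := hp h2
  rw [Measure.prod_prod] at h3
  rcases mul_eq_zero.mp h3 with h4 | h4
  · exact measure_mono_null (subset_toMeasurable μ s) h4
  · exact absurd h4 hb

lemma not_ac_prod_right {α μ : Measure Z} {β ν : Measure W} [SFinite β] [SFinite ν]
    (h : ¬ β ≪ ν) (ha : α Set.univ ≠ 0) : ¬ (α.prod β ≪ μ.prod ν) := by
  intro hp
  apply h
  intro s hs
  have hνt : ν (toMeasurable ν s) = 0 := by rwa [measure_toMeasurable]
  have h2 : (μ.prod ν) (Set.univ ×ˢ toMeasurable ν s) = 0 := by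
    rw [Measure.prod_prod, hνt, mul_zero]
  have h3 := hp h2
  rw [Measure.prod_prod] at h3
  rcases mul_eq_zero.mp h3 with h4 | h4
  · exact absurd h4 ha
  · exact measure_mono_null (subset_toMeasurable ν s) h4

lemma rnDeriv_prod_ae (α μ : Measure Z) (β ν : Measure W)
    [IsFiniteMeasure α] [IsFiniteMeasure β] [IsFiniteMeasure μ] [IsFiniteMeasure ν]
    (hα : α ≪ μ) (hβ : β ≪ ν) :
    (α.prod β).rnDeriv (μ.prod ν) =ᵐ[μ.prod ν]
      fun z => α.rnDeriv μ z.1 * β.rnDeriv ν z.2 := by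
  have hf : Measurable (α.rnDeriv μ) := Measure.measurable_rnDeriv α μ
  have hg : Measurable (β.rnDeriv ν) := Measure.measurable_rnDeriv β ν
  have hwd : α.prod β
      = (μ.prod ν).withDensity (fun z => α.rnDeriv μ z.1 * β.rnDeriv ν z.2) := by
    refine Measure.prod_eq fun s t hs ht => ?_
    rw [withDensity_apply _ (hs.prod ht), ← Measure.prod_restrict,
      lintegral_prod_mul hf.aemeasurable hg.aemeasurable,
      Measure.setLIntegral_rnDeriv hα s, Measure.setLIntegral_rnDeriv hβ t]
  rw [hwd]
  exact Measure.rnDeriv_withDensity (μ.prod ν)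
    ((hf.comp measurable_fst).mul (hg.comp measurable_snd))

lemma KLDiv_prod_formula (μ α β : Measure Z)
    [IsFiniteMeasure μ] [IsFiniteMeasure α] [IsFiniteMeasure β]
    (hα : α ≪ μ) (hβ : β ≪ μ) :
    KLDiv (α.prod β) (μ.prod μ) + α Set.univ * μ Set.univ + β Set.univ * μ Set.univ
      = β Set.univ * KLDiv α μ + α Set.univ * KLDiv β μ
        + α Set.univ * β Set.univ + μ Set.univ * μ Set.univ := by
  have hf : Measurable (α.rnDeriv μ) := Measure.measurable_rnDeriv α μ
  have hg : Measurable (β.rnDeriv μ) := Measure.measurable_rnDeriv β μ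
  set F : Z → ℝ := fun x => (α.rnDeriv μ x).toReal with hFdef
  set G : Z → ℝ := fun x => (β.rnDeriv μ x).toReal with hGdef
  have hFm : Measurable F := hf.ennreal_toReal
  have hGm : Measurable G := hg.ennreal_toReal
  set φF : Z → ℝ≥0∞ := fun x => ENNReal.ofReal (F x * Real.log (F x) - F x + 1) with hφFdef
  set φG : Z → ℝ≥0∞ := fun x => ENNReal.ofReal (G x * Real.log (G x) - G x + 1) with hφGdef
  set eF : Z → ℝ≥0∞ := fun x => ENNReal.ofReal (F x) with heFdef
  set eG : Z → ℝ≥0∞ := fun x => ENNReal.ofReal (G x) with heGdef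
  have hφFm : Measurable φF :=
    (((hFm.mul (Real.measurable_log.comp hFm)).sub hFm).add measurable_const).ennreal_ofReal
  have hφGm : Measurable φG :=
    (((hGm.mul (Real.measurable_log.comp hGm)).sub hGm).add measurable_const).ennreal_ofReal
  have heFm : Measurable eF := hFm.ennreal_ofReal
  have heGm : Measurable eG := hGm.ennreal_ofReal
  -- marginal integral evaluations
  have hFint : ∫⁻ x, eF x ∂μ = α Set.univ := by
    have h1 : ∀ᵐ x ∂μ, eF x = α.rnDeriv μ x := by
      filter_upwards [Measure.rnDeriv_lt_top α μ] with x hx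
      simp [heFdef, hFdef, ENNReal.ofReal_toReal hx.ne]
    rw [lintegral_congr_ae h1, Measure.lintegral_rnDeriv hα]
  have hGint : ∫⁻ x, eG x ∂μ = β Set.univ := by
    have h1 : ∀ᵐ x ∂μ, eG x = β.rnDeriv μ x := by
      filter_upwards [Measure.rnDeriv_lt_top β μ] with x hx
      simp [heGdef, hGdef, ENNReal.ofReal_toReal hx.ne]
    rw [lintegral_congr_ae h1, Measure.lintegral_rnDeriv hβ]
  -- KLDiv identifications
  have hKLα : KLDiv α μ = ∫⁻ x, φF x ∂μ := by rw [KLDiv, if_pos hα]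
  have hKLβ : KLDiv β μ = ∫⁻ x, φG x ∂μ := by rw [KLDiv, if_pos hβ]
  have hKLp : KLDiv (α.prod β) (μ.prod μ)
      = ∫⁻ z, ENNReal.ofReal (F z.1 * G z.2 * Real.log (F z.1 * G z.2)
          - F z.1 * G z.2 + 1) ∂(μ.prod μ) := by
    rw [KLDiv, if_pos (hα.prod hβ)]
    refine lintegral_congr_ae ((rnDeriv_prod_ae α μ β μ hα hβ).mono fun z hz => ?_)
    simp only [hz, ENNReal.toReal_mul]
    rfl
  -- pointwise key identity
  have key : ∀ z : Z × Z,
      ENNReal.ofReal (F z.1 * G z.2 * Real.log (F z.1 * G z.2) - F z.1 * G z.2 + 1)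
        + eF z.1 * 1 + 1 * eG z.2
      = φF z.1 * eG z.2 + eF z.1 * φG z.2 + eF z.1 * eG z.2 + 1 * 1 := by
    intro z
    have hs : (0:ℝ) ≤ F z.1 := ENNReal.toReal_nonneg
    have ht : (0:ℝ) ≤ G z.2 := ENNReal.toReal_nonneg
    have h1 : 0 ≤ F z.1 * G z.2 * Real.log (F z.1 * G z.2) - F z.1 * G z.2 + 1 :=
      phi_nonneg (mul_nonneg hs ht)
    have h2 : 0 ≤ F z.1 * Real.log (F z.1) - F z.1 + 1 := phi_nonneg hs
    have h3 : 0 ≤ G z.2 * Real.log (G z.2) - G z.2 + 1 := phi_nonneg ht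
    simp only [hφFdef, hφGdef, heFdef, heGdef]
    rw [mul_one, one_mul, one_mul,
      ← ENNReal.ofReal_add h1 hs, ← ENNReal.ofReal_add (add_nonneg h1 hs) ht,
      ← ENNReal.ofReal_mul h2, ← ENNReal.ofReal_mul hs, ← ENNReal.ofReal_mul hs,
      ← ENNReal.ofReal_one,
      ← ENNReal.ofReal_add (mul_nonneg h2 ht) (mul_nonneg hs h3),
      ← ENNReal.ofReal_add (add_nonneg (mul_nonneg h2 ht) (mul_nonneg hs h3))
        (mul_nonneg hs ht),
      ← ENNReal.ofReal_add (add_nonneg (add_nonneg (mul_nonneg h2 ht)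
        (mul_nonneg hs h3)) (mul_nonneg hs ht)) zero_le_one]
    exact congrArg ENNReal.ofReal (phi_identity hs ht)
  -- integrate the key identity
  have hbig :
      (∫⁻ z, ENNReal.ofReal (F z.1 * G z.2 * Real.log (F z.1 * G z.2)
          - F z.1 * G z.2 + 1) ∂(μ.prod μ))
        + (∫⁻ z : Z × Z, eF z.1 * 1 ∂(μ.prod μ))
        + (∫⁻ z : Z × Z, 1 * eG z.2 ∂(μ.prod μ))
      = (∫⁻ z : Z × Z, φF z.1 * eG z.2 ∂(μ.prod μ))
        + (∫⁻ z : Z × Z, eF z.1 * φG z.2 ∂(μ.prod μ))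
        + (∫⁻ z : Z × Z, eF z.1 * eG z.2 ∂(μ.prod μ))
        + (∫⁻ z : Z × Z, (1:ℝ≥0∞) * 1 ∂(μ.prod μ)) := by
    have hm1 : Measurable fun z : Z × Z =>
        ENNReal.ofReal (F z.1 * G z.2 * Real.log (F z.1 * G z.2) - F z.1 * G z.2 + 1) := by
      have hFG : Measurable fun z : Z × Z => F z.1 * G z.2 :=
        (hFm.comp measurable_fst).mul (hGm.comp measurable_snd)
      exact (((hFG.mul (Real.measurable_log.comp hFG)).sub hFG).add
        measurable_const).ennreal_ofReal
    have hm2 : Measurable fun z : Z × Z => eF z.1 * (1:ℝ≥0∞) :=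
      (heFm.comp measurable_fst).mul measurable_const
    have hm4 : Measurable fun z : Z × Z => φF z.1 * eG z.2 :=
      (hφFm.comp measurable_fst).mul (heGm.comp measurable_snd)
    have hm5 : Measurable fun z : Z × Z => eF z.1 * φG z.2 :=
      (heFm.comp measurable_fst).mul (hφGm.comp measurable_snd)
    have hm6 : Measurable fun z : Z × Z => eF z.1 * eG z.2 :=
      (heFm.comp measurable_fst).mul (heGm.comp measurable_snd)
    have hm12 : Measurable fun z : Z × Z =>
        ENNReal.ofReal (F z.1 * G z.2 * Real.log (F z.1 * G z.2) - F z.1 * G z.2 + 1)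
          + eF z.1 * (1:ℝ≥0∞) := hm1.add hm2
    have hm45 : Measurable fun z : Z × Z => φF z.1 * eG z.2 + eF z.1 * φG z.2 := hm4.add hm5
    have hm456 : Measurable fun z : Z × Z =>
        φF z.1 * eG z.2 + eF z.1 * φG z.2 + eF z.1 * eG z.2 := hm45.add hm6
    rw [← lintegral_add_left hm1, ← lintegral_add_left hm12,
      ← lintegral_add_left hm4, ← lintegral_add_left hm45,
      ← lintegral_add_left hm456]
    exact lintegral_congr key
  -- evaluate the six product integrals
  rw [lintegral_prod_mul hφFm.aemeasurable heGm.aemeasurable,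
    lintegral_prod_mul heFm.aemeasurable hφGm.aemeasurable,
    lintegral_prod_mul heFm.aemeasurable heGm.aemeasurable,
    lintegral_prod_mul heFm.aemeasurable (aemeasurable_const : AEMeasurable (fun _ : Z => (1:ℝ≥0∞)) μ),
    lintegral_prod_mul (aemeasurable_const : AEMeasurable (fun _ : Z => (1:ℝ≥0∞)) μ) heGm.aemeasurable,
    lintegral_prod_mul (aemeasurable_const : AEMeasurable (fun _ : Z => (1:ℝ≥0∞)) μ)
      (aemeasurable_const : AEMeasurable (fun _ : Z => (1:ℝ≥0∞)) μ),
    lintegral_one, hFint, hGint] at hbig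
  rw [mul_comm (μ Set.univ) (β Set.univ),
    mul_comm (∫⁻ (x : Z), φF x ∂μ) (β Set.univ)] at hbig
  rw [hKLp, hKLα, hKLβ]
  exact hbig

lemma KLDiv_cross (μ α β : Measure Z)
    [IsFiniteMeasure μ] [IsFiniteMeasure α] [IsFiniteMeasure β]
    (hm : α Set.univ = β Set.univ) :
    KLDiv (α.prod α) (μ.prod μ) + KLDiv (β.prod β) (μ.prod μ)
      = 2 * KLDiv (α.prod β) (μ.prod μ) := by
  by_cases hα : α ≪ μ
  · by_cases hβ : β ≪ μ
    · have E1 := KLDiv_prod_formula μ α α hα hα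
      have E2 := KLDiv_prod_formula μ β β hβ hβ
      have E3 := KLDiv_prod_formula μ α β hα hβ
      rw [hm] at E1 E3
      set u := β Set.univ
      set m0 := μ Set.univ
      set Ka := KLDiv α μ
      set Kb := KLDiv β μ
      set X1 := KLDiv (α.prod α) (μ.prod μ)
      set X2 := KLDiv (β.prod β) (μ.prod μ)
      set X3 := KLDiv (α.prod β) (μ.prod μ)
      have hfin : u * m0 + u * m0 + (u * m0 + u * m0) ≠ ∞ := by
        have h1 : u * m0 ≠ ∞ := ENNReal.mul_ne_top (measure_ne_top β _) (measure_ne_top μ _)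
        exact ENNReal.add_ne_top.mpr ⟨ENNReal.add_ne_top.mpr ⟨h1, h1⟩,
          ENNReal.add_ne_top.mpr ⟨h1, h1⟩⟩
      have hkey : X1 + X2 + (u * m0 + u * m0 + (u * m0 + u * m0))
          = 2 * X3 + (u * m0 + u * m0 + (u * m0 + u * m0)) := by
        calc X1 + X2 + (u * m0 + u * m0 + (u * m0 + u * m0))
            = (X1 + u * m0 + u * m0) + (X2 + u * m0 + u * m0) := by ring
          _ = (u * Ka + u * Ka + u * u + m0 * m0) + (u * Kb + u * Kb + u * u + m0 * m0) := by
              rw [E1, E2]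
          _ = 2 * (u * Ka + u * Kb + u * u + m0 * m0) := by ring
          _ = 2 * (X3 + u * m0 + u * m0) := by rw [E3]
          _ = 2 * X3 + (u * m0 + u * m0 + (u * m0 + u * m0)) := by ring
      exact (ENNReal.add_left_inj hfin).mp hkey
    · have hβ0 : β Set.univ ≠ 0 := by
        intro h0
        exact hβ (Measure.measure_univ_eq_zero.mp h0 ▸ Measure.AbsolutelyContinuous.zero μ)
      have h2 : KLDiv (β.prod β) (μ.prod μ) = ∞ := by
        rw [KLDiv, if_neg (not_ac_prod_right hβ hβ0)]
      have h3 : KLDiv (α.prod β) (μ.prod μ) = ∞ := by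
        rw [KLDiv, if_neg (not_ac_prod_right hβ (hm ▸ hβ0))]
      rw [h2, h3, add_top, ENNReal.mul_top (by norm_num)]
  · have hα0 : α Set.univ ≠ 0 := by
      intro h0
      exact hα (Measure.measure_univ_eq_zero.mp h0 ▸ Measure.AbsolutelyContinuous.zero μ)
    have h2 : KLDiv (α.prod α) (μ.prod μ) = ∞ := by
      rw [KLDiv, if_neg (not_ac_prod_left hα hα0)]
    have h3 : KLDiv (α.prod β) (μ.prod μ) = ∞ := by
      rw [KLDiv, if_neg (not_ac_prod_left hα (hm ▸ hα0))]
    rw [h2, h3, top_add, ENNReal.mul_top (by norm_num)]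

lemma Feps_convexity {X Y : Type*}
    [MetricSpace X] [MeasurableSpace X]
    [MetricSpace Y] [MeasurableSpace Y]
    (μ : Measure X) (ν : Measure Y) [IsFiniteMeasure μ] [IsFiniteMeasure ν]
    (lam : ℝ≥0 → ℝ≥0) (ρ ε : ℝ≥0)
    (hneg : ∀ η₁ η₂ : Measure (X × Y), IsFiniteMeasure η₁ → IsFiniteMeasure η₂ →
      η₁ Set.univ = η₂ Set.univ →
      (∫⁻ z, gwKer lam z ∂(η₁.prod η₁)) + (∫⁻ z, gwKer lam z ∂(η₂.prod η₂)) ≤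
        2 * ∫⁻ z, gwKer lam z ∂(η₁.prod η₂))
    (π γ : Measure (X × Y)) (hπ : IsFiniteMeasure π) (hγ : IsFiniteMeasure γ)
    (hmass : π Set.univ = γ Set.univ) :
    Feps lam ρ ε μ ν π π + Feps lam ρ ε μ ν γ γ ≤ 2 * Feps lam ρ ε μ ν π γ := by
  haveI := hπ; haveI := hγ
  have h1 : KLDiv (π.fst.prod π.fst) (μ.prod μ) + KLDiv (γ.fst.prod γ.fst) (μ.prod μ)
      = 2 * KLDiv (π.fst.prod γ.fst) (μ.prod μ) :=
    KLDiv_cross μ π.fst γ.fst (by rw [Measure.fst_univ, Measure.fst_univ, hmass])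
  have h2 : KLDiv (π.snd.prod π.snd) (ν.prod ν) + KLDiv (γ.snd.prod γ.snd) (ν.prod ν)
      = 2 * KLDiv (π.snd.prod γ.snd) (ν.prod ν) :=
    KLDiv_cross ν π.snd γ.snd (by rw [Measure.snd_univ, Measure.snd_univ, hmass])
  have h3 : KLDiv (π.prod π) ((μ.prod ν).prod (μ.prod ν))
        + KLDiv (γ.prod γ) ((μ.prod ν).prod (μ.prod ν))
      = 2 * KLDiv (π.prod γ) ((μ.prod ν).prod (μ.prod ν)) :=
    KLDiv_cross (μ.prod ν) π γ hmass
  have h0 := hneg π γ hπ hγ hmass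
  simp only [Feps]
  calc (∫⁻ z, gwKer lam z ∂(π.prod π))
        + ρ * KLDiv (π.fst.prod π.fst) (μ.prod μ)
        + ρ * KLDiv (π.snd.prod π.snd) (ν.prod ν)
        + ε * KLDiv (π.prod π) ((μ.prod ν).prod (μ.prod ν))
      + ((∫⁻ z, gwKer lam z ∂(γ.prod γ))
        + ρ * KLDiv (γ.fst.prod γ.fst) (μ.prod μ)
        + ρ * KLDiv (γ.snd.prod γ.snd) (ν.prod ν)
        + ε * KLDiv (γ.prod γ) ((μ.prod ν).prod (μ.prod ν)))
      = ((∫⁻ z, gwKer lam z ∂(π.prod π)) + (∫⁻ z, gwKer lam z ∂(γ.prod γ)))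
        + (ρ * (KLDiv (π.fst.prod π.fst) (μ.prod μ) + KLDiv (γ.fst.prod γ.fst) (μ.prod μ))
          + ρ * (KLDiv (π.snd.prod π.snd) (ν.prod ν) + KLDiv (γ.snd.prod γ.snd) (ν.prod ν))
          + ε * (KLDiv (π.prod π) ((μ.prod ν).prod (μ.prod ν))
            + KLDiv (γ.prod γ) ((μ.prod ν).prod (μ.prod ν)))) := by ring
    _ = ((∫⁻ z, gwKer lam z ∂(π.prod π)) + (∫⁻ z, gwKer lam z ∂(γ.prod γ)))
        + (ρ * (2 * KLDiv (π.fst.prod γ.fst) (μ.prod μ))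
          + ρ * (2 * KLDiv (π.snd.prod γ.snd) (ν.prod ν))
          + ε * (2 * KLDiv (π.prod γ) ((μ.prod ν).prod (μ.prod ν)))) := by
        rw [h1, h2, h3]
    _ ≤ 2 * (∫⁻ z, gwKer lam z ∂(π.prod γ))
        + (ρ * (2 * KLDiv (π.fst.prod γ.fst) (μ.prod μ))
          + ρ * (2 * KLDiv (π.snd.prod γ.snd) (ν.prod ν))
          + ε * (2 * KLDiv (π.prod γ) ((μ.prod ν).prod (μ.prod ν)))) :=
        add_le_add_left h0 _
    _ = 2 * ((∫⁻ z, gwKer lam z ∂(π.prod γ))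
        + ρ * KLDiv (π.fst.prod γ.fst) (μ.prod μ)
        + ρ * KLDiv (π.snd.prod γ.snd) (ν.prod ν)
        + ε * KLDiv (π.prod γ) ((μ.prod ν).prod (μ.prod ν))) := by ring

end AuxLemmas

/-- Tightness of the bi-convex relaxation for the entropic
KL-unbalanced Gromov--Wasserstein problem: if the kernel `λ(|d_X − d_Y|)` is negative
semi-definite on differences of finite measures with equal mass, then every minimizer
`(π*, γ*)` of `F_ε` over pairs of finite measures with equal total mass satisfies
`F_ε(π*,γ*) = F_ε(π*,π*) = F_ε(γ*,γ*)`. -/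
theorem ugw_entropic_relaxation_tight
    {X Y : Type*}
    [MetricSpace X] [CompactSpace X] [MeasurableSpace X] [BorelSpace X]
    [MetricSpace Y] [CompactSpace Y] [MeasurableSpace Y] [BorelSpace Y]
    (μ : Measure X) (ν : Measure Y) [IsFiniteMeasure μ] [IsFiniteMeasure ν]
    (lam : ℝ≥0 → ℝ≥0) (ρ ε : ℝ≥0) (hρ : 0 < ρ)
    (hneg : ∀ η₁ η₂ : Measure (X × Y), IsFiniteMeasure η₁ → IsFiniteMeasure η₂ →
      η₁ Set.univ = η₂ Set.univ →
      (∫⁻ z, gwKer lam z ∂(η₁.prod η₁)) + (∫⁻ z, gwKer lam z ∂(η₂.prod η₂)) ≤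
        2 * ∫⁻ z, gwKer lam z ∂(η₁.prod η₂))
    (πs γs : Measure (X × Y)) (hπs : IsFiniteMeasure πs) (hγs : IsFiniteMeasure γs)
    (hmass : πs Set.univ = γs Set.univ)
    (hmin : ∀ π γ : Measure (X × Y), IsFiniteMeasure π → IsFiniteMeasure γ →
      π Set.univ = γ Set.univ → Feps lam ρ ε μ ν πs γs ≤ Feps lam ρ ε μ ν π γ) :
    Feps lam ρ ε μ ν πs γs = Feps lam ρ ε μ ν πs πs ∧
    Feps lam ρ ε μ ν πs γs = Feps lam ρ ε μ ν γs γs := by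
  have hAB : Feps lam ρ ε μ ν πs γs ≤ Feps lam ρ ε μ ν πs πs := hmin πs πs hπs hπs rfl
  have hAC : Feps lam ρ ε μ ν πs γs ≤ Feps lam ρ ε μ ν γs γs := hmin γs γs hγs hγs rfl
  have hsum := Feps_convexity μ ν lam ρ ε hneg πs γs hπs hγs hmass
  set A := Feps lam ρ ε μ ν πs γs
  set B := Feps lam ρ ε μ ν πs πs
  set C := Feps lam ρ ε μ ν γs γs
  by_cases hA : A = ∞
  · constructor
    · exact le_antisymm hAB (hA ▸ le_top)
    · exact le_antisymm hAC (hA ▸ le_top)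
  · rw [two_mul] at hsum
    constructor
    · refine le_antisymm hAB ?_
      have : B + A ≤ A + A := le_trans (add_le_add_right hAC B) hsum
      exact (ENNReal.add_le_add_iff_right hA).mp this
    · refine le_antisymm hAC ?_
      have : C + A ≤ A + A := by
        calc C + A ≤ C + B := add_le_add_right hAB C
          _ = B + C := add_comm C B
          _ ≤ A + A := hsum
      exact (ENNReal.add_le_add_iff_right hA).mp this

end
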